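/- Let G be a group acting on a crossed module (M,L,∂), let A = ker(∂), N = ∂(M), Q = L/N with quotient map π : L → Q school and the induced G-action on Q. Let x ∈ L be an element such that π(x) is G-fixed in Q (ᵍπ(x) = π(x) for all g ∈ G). Then the set B_x := {(m, g) ∈ M × G | ∂(m)·(ᵍx) = x} is a group under the operation (m, g)·(n, h) := (m·(ᵍn), g·h) with identity (1, 1); the map κ : A → B_x, κ(a) = (a, 1), is an injective group homomorphism; the map p : B_x → G, p(m, g) = g, is a surjective group homomorphism; and ker p = κ(A). Thus 1 → A →κ B_x →p G → 1 is a short exact sequence of groups with abelian kernel A. -/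

import Mathlib

/-- Proposition 28(iii): for `x ∈ L` whose class in `Q = L/∂(M)` is `G`-fixed, the
set `B_x = {(m, g) ∈ M × G | pd m · ᵍx = x}` is a group under
`(m, g) · (n, h) = (m · ᵍn, g·h)`, giving a short exact sequence
`1 → A → B_x → G → 1` with abelian kernel `A = ker pd`. -/
theorem statement17
    {G M L : Type} [Group G] [Group M] [Group L]
    (pd : M →* L) (ρ : L →* MulAut M)
    -- crossed module axioms
    (hpeif1 : ∀ (x : L) (m : M), pd (ρ x m) = x * pd m * x⁻¹)
    (hpeif2 : ∀ (n m : M), ρ (pd n) m = n * m * n⁻¹)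
    -- G-action on the crossed module
    (φM : G →* MulAut M) (φL : G →* MulAut L)
    (hact1 : ∀ (g : G) (m : M), pd (φM g m) = φL g (pd m))
    (hact2 : ∀ (g : G) (x : L) (m : M), φM g (ρ x m) = ρ (φL g x) (φM g m))
    -- x ∈ L with π(x) a G-fixed point of Q = L/∂(M)
    (x : L)
    (hx : ∀ g : G, (QuotientGroup.mk (φL g x) : L ⧸ pd.range) = QuotientGroup.mk x)
    -- the operation (m, g) · (n, h) = (m · ᵍn, g·h) on M × G
    (op : M × G → M × G → M × G)
    (hop : ∀ (m n : M) (g h : G), op (m, g) (n, h) = (m * φM g n, g * h)) :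
    -- B_x is closed under the operation
    (∀ p q : M × G, pd p.1 * φL p.2 x = x → pd q.1 * φL q.2 x = x →
      pd (op p q).1 * φL (op p q).2 x = x) ∧
    -- the operation is associative with identity (1, 1) ∈ B_x ...
    (∀ p q r : M × G, op (op p q) r = op p (op q r)) ∧
    (pd (1 : M) * φL (1 : G) x = x) ∧
    (∀ p : M × G, op (1, 1) p = p ∧ op p (1, 1) = p) ∧
    -- ... and elements of B_x have inverses in B_x
    (∀ p : M × G, pd p.1 * φL p.2 x = x →
      ∃ q : M × G, pd q.1 * φL q.2 x = x ∧ op p q = (1, 1) ∧ op q p = (1, 1)) ∧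
    -- κ : A → B_x, κ a = (a, 1), is an injective homomorphism into B_x
    (∀ a : M, pd a = 1 → pd a * φL (1 : G) x = x) ∧
    (∀ a b : M, op (a, 1) (b, 1) = ((a * b : M), (1 : G))) ∧
    (Function.Injective fun a : M => ((a, 1) : M × G)) ∧
    -- p : B_x → G, (m, g) ↦ g, is a surjective homomorphism
    (∀ p q : M × G, (op p q).2 = p.2 * q.2) ∧
    (∀ g : G, ∃ p : M × G, pd p.1 * φL p.2 x = x ∧ p.2 = g) ∧
    -- ker p = κ(A)
    (∀ p : M × G, pd p.1 * φL p.2 x = x →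
      (p.2 = 1 ↔ ∃ a : M, pd a = 1 ∧ p = (a, 1))) ∧
    -- the kernel A = ker pd is abelian
    (∀ a b : M, pd a = 1 → pd b = 1 → a * b = b * a) := by
  refine ⟨?_, ?_, ?_, ?_, ?_, ?_, ?_, ?_, ?_, ?_, ?_, ?_⟩
  · rintro ⟨m, g⟩ ⟨n, h⟩ hp hq
    simp only at hp hq
    rw [hop]
    simp only [map_mul, MulAut.mul_apply, hact1, ← map_mul (φL g), hq, hp, mul_assoc]
  · rintro ⟨m, g⟩ ⟨n, h⟩ ⟨k, l⟩
    simp only [hop, map_mul, MulAut.mul_apply, mul_assoc]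
  · simp [map_one]
  · rintro ⟨m, g⟩
    constructor
    · simp [hop, map_one]
    · simp [hop, map_one]
  · rintro ⟨m, g⟩ hp
    simp only at hp
    refine ⟨(φM g⁻¹ m⁻¹, g⁻¹), ?_, ?_, ?_⟩
    · have h1 : (pd m)⁻¹ * x = φL g x := by
        conv_lhs => rw [← hp]
        group
      rw [hact1, map_inv pd m, ← map_mul, h1, ← MulAut.mul_apply, ← map_mul,
        inv_mul_cancel, map_one, MulAut.one_apply]
    · rw [hop]
      rw [← MulAut.mul_apply, ← map_mul]
      simp
    · rw [hop]
      simp [← MulAut.mul_apply, ← map_mul]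
  · intro a ha
    simp [ha, map_one]
  · intro a b
    simp [hop, map_one]
  · intro a b hab
    simpa using hab
  · rintro ⟨m, g⟩ ⟨n, h⟩
    simp [hop]
  · intro g
    have := (QuotientGroup.eq ).mp (hx g)
    obtain ⟨m, hm⟩ := this
    refine ⟨(ρ x m, g), ?_, rfl⟩
    simp only [hpeif1, hm]
    group
  · rintro ⟨m, g⟩ hp
    simp only at hp ⊢
    constructor
    · rintro rfl
      rw [map_one, MulAut.one_apply, mul_eq_right] at hp
      exact ⟨m, hp, rfl⟩
    · rintro ⟨a, ha, heq⟩
      exact (Prod.mk.injEq _ _ _ _ ▸ heq).2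
  · intro a b ha hb
    have := hpeif2 a b
    rw [ha, map_one, MulAut.one_apply] at this
    nth_rewrite 2 [this]
    group
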